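/- Let (p_n), (q_n) be Nörlund sequences with comparison coefficients (k_n). Suppose conditions R1: there is H ≥ 0 with Σ_{n=0}^m |k_{m-n}| P_n ≤ H Q_m for all m, and R2: k_m/Q_m → 0 as m → ∞. Then the matrix c_{m,n} = k_{m-n} P_n / Q_m (n ≤ m), 0 otherwise, satisfies the three Silverman–Toeplitz regularity conditions: uniformly bounded absolute row sums, columns tending to 0, and row sums equal to 1. -/

import Mathlib

theorem riesz_conditions_imply_toeplitz_conditions
    (p q k : ℕ → ℝ)
    (hp0 : 0 < p 0) (hp : ∀ n, 0 < n → 0 ≤ p n)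
    (hq0 : 0 < q 0) (hq : ∀ n, 0 < n → 0 ≤ q n)
    (hk : ∀ n, q n = ∑ j ∈ Finset.range (n + 1), k j * p (n - j))
    (P Q : ℕ → ℝ)
    (hP : ∀ n, P n = ∑ i ∈ Finset.range (n + 1), p i)
    (hQ : ∀ n, Q n = ∑ i ∈ Finset.range (n + 1), q i)
    (c : ℕ → ℕ → ℝ)
    (hc : ∀ m n, c m n = if n ≤ m then k (m - n) * P n / Q m else 0)
    (H : ℝ) (hH : 0 ≤ H)
    (hR1 : ∀ m, ∑ n ∈ Finset.range (m + 1), |k (m - n)| * P n ≤ H * Q m)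
    (hR2 : Filter.Tendsto (fun m => k m / Q m) Filter.atTop (nhds 0)) :
    (∀ m, ∑ n ∈ Finset.range (m + 1), |c m n| ≤ H) ∧
    (∀ n, Filter.Tendsto (fun m => c m n) Filter.atTop (nhds 0)) ∧
    (∀ m, ∑ n ∈ Finset.range (m + 1), c m n = 1) := by
  -- positivity of P and Q
  have hPpos : ∀ n, 0 < P n := by
    intro n
    rw [hP]
    have h0 : (0 : ℕ) ∈ Finset.range (n + 1) := by simp
    calc (0:ℝ) < p 0 := hp0
      _ ≤ ∑ i ∈ Finset.range (n + 1), p i := by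
          apply Finset.single_le_sum _ h0
          intro i _
          rcases Nat.eq_zero_or_pos i with h | h
          · simp [h]; exact hp0.le
          · exact hp _ h
  have hQpos : ∀ n, 0 < Q n := by
    intro n
    rw [hQ]
    have h0 : (0 : ℕ) ∈ Finset.range (n + 1) := by simp
    calc (0:ℝ) < q 0 := hq0
      _ ≤ ∑ i ∈ Finset.range (n + 1), q i := by
          apply Finset.single_le_sum _ h0
          intro i _
          rcases Nat.eq_zero_or_pos i with h | h
          · simp [h]; exact hq0.le
          · exact hq _ h
  have hQmono : Monotone Q := by
    apply monotone_nat_of_le_succ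
    intro n
    rw [hQ, hQ, Finset.sum_range_succ (n := n + 1)]
    have : 0 ≤ q (n + 1) := hq _ (Nat.succ_pos n)
    linarith
  -- the convolution identity: Q m = ∑ k (m - n) * P n
  have hconv : ∀ m, Q m = ∑ n ∈ Finset.range (m + 1), k (m - n) * P n := by
    intro m
    rw [hQ]
    have step1 : ∑ n ∈ Finset.range (m + 1), q n
        = ∑ n ∈ Finset.range (m + 1), ∑ j ∈ Finset.range (m + 1),
            (if j ≤ n then k j * p (n - j) else 0) := by
      apply Finset.sum_congr rfl
      intro n hn
      rw [hk n, ← Finset.sum_filter]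
      apply Finset.sum_congr
      · ext j
        simp only [Finset.mem_filter, Finset.mem_range]
        have := Finset.mem_range.mp hn
        omega
      · intros; rfl
    rw [step1, Finset.sum_comm]
    have step2 : ∀ j ∈ Finset.range (m + 1),
        ∑ n ∈ Finset.range (m + 1), (if j ≤ n then k j * p (n - j) else 0)
          = k j * P (m - j) := by
      intro j hj
      have hjm : j ≤ m := Nat.lt_succ_iff.mp (Finset.mem_range.mp hj)
      rw [← Finset.sum_filter]
      have hfil : (Finset.range (m + 1)).filter (fun n => j ≤ n)
          = Finset.Ico j (m + 1) := by
        ext n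
        simp only [Finset.mem_filter, Finset.mem_range, Finset.mem_Ico]
        tauto
      rw [hfil, Finset.sum_Ico_eq_sum_range]
      rw [hP, Finset.mul_sum]
      have : m + 1 - j = m - j + 1 := by omega
      rw [this]
      apply Finset.sum_congr rfl
      intro i _
      have hji : j + i - j = i := by omega
      rw [hji]
    rw [Finset.sum_congr rfl step2]
    rw [← Finset.sum_range_reflect]
    apply Finset.sum_congr rfl
    intro j hj
    have hjm : j ≤ m := Nat.lt_succ_iff.mp (Finset.mem_range.mp hj)
    have h1 : m + 1 - 1 - j = m - j := by omega
    have h2 : m - (m - j) = j := by omega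
    rw [h1, h2]
  refine ⟨?_, ?_, ?_⟩
  · -- bounded absolute row sums
    intro m
    have : ∑ n ∈ Finset.range (m + 1), |c m n|
        = (∑ n ∈ Finset.range (m + 1), |k (m - n)| * P n) / Q m := by
      rw [Finset.sum_div]
      apply Finset.sum_congr rfl
      intro n hn
      have hnm : n ≤ m := Nat.lt_succ_iff.mp (Finset.mem_range.mp hn)
      rw [hc m n, if_pos hnm, abs_div, abs_mul, abs_of_pos (hPpos n),
        abs_of_pos (hQpos m)]
    rw [this, div_le_iff₀ (hQpos m)]
    exact hR1 m
  · -- columns tend to zero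
    intro n
    have hlim : Filter.Tendsto (fun m => P n * |k (m - n) / Q (m - n)|)
        Filter.atTop (nhds 0) := by
      have h1 : Filter.Tendsto (fun m : ℕ => m - n) Filter.atTop Filter.atTop :=
        Filter.tendsto_sub_atTop_nat n
      have h2 : Filter.Tendsto (fun m => k (m - n) / Q (m - n)) Filter.atTop (nhds 0) :=
        hR2.comp h1
      have := (h2.abs.const_mul (P n))
      simpa using this
    apply squeeze_zero_norm _ hlim
    intro m
    rcases le_or_gt n m with hnm | hnm
    · rw [hc m n, if_pos hnm]
      rw [Real.norm_eq_abs, abs_div, abs_mul, abs_of_pos (hPpos n),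
        abs_of_pos (hQpos m), abs_div, abs_of_pos (hQpos (m - n))]
      rw [mul_comm (|k (m - n)|) (P n), mul_div_assoc]
      apply mul_le_mul_of_nonneg_left _ (hPpos n).le
      apply div_le_div_of_nonneg_left (abs_nonneg _) (hQpos (m - n))
      exact hQmono (Nat.sub_le m n)
    · rw [hc m n, if_neg (not_le.mpr hnm)]
      simp only [norm_zero]
      exact mul_nonneg (hPpos n).le (abs_nonneg _)
  · -- row sums equal 1
    intro m
    have : ∑ n ∈ Finset.range (m + 1), c m n
        = (∑ n ∈ Finset.range (m + 1), k (m - n) * P n) / Q m := by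
      rw [Finset.sum_div]
      apply Finset.sum_congr rfl
      intro n hn
      have hnm : n ≤ m := Nat.lt_succ_iff.mp (Finset.mem_range.mp hn)
      rw [hc m n, if_pos hnm]
    rw [this, ← hconv m, div_self (hQpos m).ne']
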